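/- arXiv:0902.4771 — 9 statements merged into one kernel-verified Lean document; each statement's English description precedes it below -/
import Mathlib

section
/- Let q and s be quaternions with qs ≠ sq. Then (q - conj(s))⁻¹ * s * (q - conj(s)) - q = -(q - conj(s))⁻¹ * (q² - 2*q*Re(s) + |s|²), where Re(s) and |s|² are regarded as real scalars. -/
open Quaternion

theorem stmt_1 (q s : ℍ[ℝ]) (h : q * s ≠ s * q) :
    (q - star s)⁻¹ * s * (q - star s) - q =
      -(q - star s)⁻¹ * (q ^ 2 - 2 * q * (s.re : ℍ[ℝ]) + ((‖s‖ ^ 2 : ℝ) : ℍ[ℝ])) := by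
  have hne : q - star s ≠ 0 := by
    intro h0
    apply h
    rw [sub_eq_zero] at h0
    rw [h0, star_comm_self]
  have hs : s * star s = ((‖s‖ ^ 2 : ℝ) : ℍ[ℝ]) := by
    rw [self_mul_star, normSq_eq_norm_mul_self, sq]
  have hre : q * ((s.re : ℝ) : ℍ[ℝ]) = ((s.re : ℝ) : ℍ[ℝ]) * q := (Quaternion.coe_commutes _ _).symm
  have key : s * (q - star s) - (q - star s) * q
      = -(q ^ 2 - 2 * q * (s.re : ℍ[ℝ]) + ((‖s‖ ^ 2 : ℝ) : ℍ[ℝ])) := by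
    have e1 : s * (q - star s) - (q - star s) * q
        = (s + star s) * q - s * star s - q ^ 2 := by noncomm_ring
    rw [e1, self_add_star' s, hs]
    push_cast
    have e2 : (((2:ℝ)) : ℍ[ℝ]) * ((s.re : ℝ) : ℍ[ℝ]) * q = 2 * q * ((s.re : ℝ) : ℍ[ℝ]) := by
      rw [mul_assoc, ← hre, ← mul_assoc]
      norm_cast
    rw [e2]
    noncomm_ring
  have expand : (q - star s)⁻¹ * (s * (q - star s) - (q - star s) * q)
      = (q - star s)⁻¹ * s * (q - star s) - q := by
    rw [mul_sub, ← mul_assoc, ← mul_assoc, inv_mul_cancel₀ hne, one_mul]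
  rw [← expand, key, neg_mul, mul_neg]
end

section
/- For any quaternions q, s with q ≠ conj(s), the identity -(q - conj(s))⁻¹ * (q² - 2*Re(s)*q + |s|²) = (s² - 2*Re(q)*s + |q|²) * (s - conj(q))⁻¹ holds. -/
set_option maxHeartbeats 2000000


open Quaternion

theorem stmt_3 (q s : ℍ[ℝ]) (h : q ≠ star s) :
    -(q - star s)⁻¹ * (q ^ 2 - 2 * ((s.re : ℝ) : ℍ[ℝ]) * q + ((‖s‖ ^ 2 : ℝ) : ℍ[ℝ])) =
      (s ^ 2 - 2 * ((q.re : ℝ) : ℍ[ℝ]) * s + ((‖q‖ ^ 2 : ℝ) : ℍ[ℝ])) * (s - star q)⁻¹ := by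
  have hns : ∀ a : ℍ[ℝ], ‖a‖ ^ 2 = normSq a := fun a => by
    rw [sq, ← Quaternion.normSq_eq_norm_mul_self]
  set P : ℍ[ℝ] := q ^ 2 - 2 * ((s.re : ℝ) : ℍ[ℝ]) * q + ((‖s‖ ^ 2 : ℝ) : ℍ[ℝ]) with hP
  set Q : ℍ[ℝ] := s ^ 2 - 2 * ((q.re : ℝ) : ℍ[ℝ]) * s + ((‖q‖ ^ 2 : ℝ) : ℍ[ℝ]) with hQ
  have hA : q - star s ≠ 0 := sub_ne_zero.mpr h
  have hB : s - star q ≠ 0 := sub_ne_zero.mpr fun hc => h (by rw [hc, star_star])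
  have key : (q - star s) * Q = -(P * (s - star q)) := by
    rw [hP, hQ, hns, hns]
    ext <;>
      simp [Quaternion.normSq_def', sq, two_mul, Quaternion.re_mul, Quaternion.imI_mul,
        Quaternion.imJ_mul, Quaternion.imK_mul] <;>
      ring
  calc -(q - star s)⁻¹ * P
      = -((q - star s)⁻¹ * (P * ((s - star q) * (s - star q)⁻¹))) := by
        rw [mul_inv_cancel₀ hB, mul_one, neg_mul]
    _ = (q - star s)⁻¹ * (-(P * (s - star q))) * (s - star q)⁻¹ := by
        simp only [neg_mul, mul_neg, mul_assoc]
    _ = (q - star s)⁻¹ * ((q - star s) * Q) * (s - star q)⁻¹ := by rw [key]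
    _ = Q * (s - star q)⁻¹ := by rw [← mul_assoc, inv_mul_cancel₀ hA, one_mul]
end

section
/- Let q, s be quaternions with q² - 2*Re(s)*q + |s|² ≠ 0, and suppose qs = sq. Then -(q² - 2*Re(s)*q + |s|²)⁻¹ * (q - conj(s)) = (s - q)⁻¹, provided also s ≠ q. -/
open Quaternion

theorem stmt_5 (q s : ℍ[ℝ])
    (h0 : q ^ 2 - 2 * ((s.re : ℝ) : ℍ[ℝ]) * q + ((‖s‖ ^ 2 : ℝ) : ℍ[ℝ]) ≠ 0)
    (hcomm : q * s = s * q) (hne : s ≠ q) :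
    -(q ^ 2 - 2 * ((s.re : ℝ) : ℍ[ℝ]) * q + ((‖s‖ ^ 2 : ℝ) : ℍ[ℝ]))⁻¹ * (q - star s) =
      (s - q)⁻¹ := by
  set c : ℍ[ℝ] := ((s.re : ℝ) : ℍ[ℝ]) with hc
  have hstar : (star s : ℍ[ℝ]) = 2 * c - s := by
    have h := Quaternion.self_add_star' s
    rw [eq_sub_iff_add_eq, add_comm, h, hc]
    push_cast
    rw [show (2:ℝ) = 1 + 1 by norm_num, Quaternion.coe_add, Quaternion.coe_one]
    norm_num
  have hns : ((‖s‖ ^ 2 : ℝ) : ℍ[ℝ]) = s * star s := by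
    rw [Quaternion.self_mul_star, sq, Quaternion.normSq_eq_norm_mul_self]
  have hCqs : Commute q s := hcomm
  have h2q : Commute q (2 * c) :=
    (Commute.ofNat_right q 2).mul_right ((Quaternion.coe_commute s.re q).symm)
  have h2s : Commute s (2 * c) :=
    (Commute.ofNat_right s 2).mul_right ((Quaternion.coe_commute s.re s).symm)
  have hc2 : Commute q (star s) := by rw [hstar]; exact h2q.sub_right hCqs
  have hcs : Commute s (star s) := by rw [hstar]; exact h2s.sub_right (Commute.refl s)
  have e1 : q * star s = 2 * c * q - s * q := by
    rw [hstar, mul_sub, hcomm, h2q.eq]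
  have key : q ^ 2 - 2 * c * q + ((‖s‖ ^ 2 : ℝ) : ℍ[ℝ]) = (q - s) * (q - star s) := by
    have expand : (q - s) * (q - star s) = q ^ 2 - q * star s - s * q + s * star s := by
      noncomm_ring
    rw [expand, e1, hns]
    abel
  have hqs : q - s ≠ 0 := sub_ne_zero.mpr (fun h => hne h.symm)
  have hqc : q - star s ≠ 0 := by
    intro h
    rw [key, h, mul_zero] at h0
    exact h0 rfl
  have hC : Commute (q - s) (q - star s) :=
    ((Commute.refl q).sub_right hc2).sub_left (hCqs.symm.sub_right hcs)
  rw [key, hC.eq, mul_inv_rev, neg_mul, mul_assoc, inv_mul_cancel₀ hqc,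
    mul_one, ← inv_neg, neg_sub]
end

section
/- Let q, s be quaternions with |q| < |s| (so s ≠ 0). Then the series ∑_{n≥0} qⁿ * s^{-1-n} converges, and if moreover q² - 2*Re(s)*q + |s|² ≠ 0, its sum equals -(q² - 2*Re(s)*q + |s|²)⁻¹ * (q - conj(s)). -/
open Quaternion

theorem stmt_6 (q s : ℍ[ℝ]) (h : ‖q‖ < ‖s‖) :
    Summable (fun n : ℕ => q ^ n * (s⁻¹) ^ (n + 1)) ∧
    (q ^ 2 - 2 * ((s.re : ℝ) : ℍ[ℝ]) * q + ((‖s‖ ^ 2 : ℝ) : ℍ[ℝ]) ≠ 0 →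
      ∑' n : ℕ, q ^ n * (s⁻¹) ^ (n + 1) =
        -(q ^ 2 - 2 * ((s.re : ℝ) : ℍ[ℝ]) * q + ((‖s‖ ^ 2 : ℝ) : ℍ[ℝ]))⁻¹ * (q - star s)) := by
  have hspos : 0 < ‖s‖ := lt_of_le_of_lt (norm_nonneg q) h
  have hs : s ≠ 0 := norm_pos_iff.mp hspos
  have hr : ‖q‖ * ‖s‖⁻¹ < 1 := by
    rw [← div_eq_mul_inv, div_lt_one hspos]; exact h
  have hr0 : 0 ≤ ‖q‖ * ‖s‖⁻¹ := by positivity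
  -- summability of f
  have hsum : Summable (fun n : ℕ => q ^ n * (s⁻¹) ^ (n + 1)) := by
    apply Summable.of_norm
    apply Summable.of_nonneg_of_le (fun n => norm_nonneg _)
      (fun n => ?_) (Summable.mul_right ‖s‖⁻¹ (summable_geometric_of_lt_one hr0 hr))
    apply le_of_eq
    rw [norm_mul, norm_pow, norm_pow, norm_inv, pow_succ, mul_pow]
    ring
  -- summability of g n = q^n * (s⁻¹)^n
  have hg : Summable (fun n : ℕ => q ^ n * (s⁻¹) ^ n) := by
    apply Summable.of_norm
    apply Summable.of_nonneg_of_le (fun n => norm_nonneg _)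
      (fun n => ?_) (summable_geometric_of_lt_one hr0 hr)
    rw [norm_mul, norm_pow, norm_pow, norm_inv, ← mul_pow]
  refine ⟨hsum, fun hP => ?_⟩
  set T := ∑' n : ℕ, q ^ n * (s⁻¹) ^ (n + 1) with hT
  -- key identity T * s - q * T = 1
  have h1 : T * s = ∑' n : ℕ, q ^ n * (s⁻¹) ^ n := by
    rw [hT, ← tsum_mul_right]
    exact tsum_congr fun n => by
      rw [pow_succ, mul_assoc, mul_assoc, inv_mul_cancel₀ hs, mul_one]
  have h2 : q * T = ∑' n : ℕ, q ^ (n + 1) * (s⁻¹) ^ (n + 1) := by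
    rw [hT, ← tsum_mul_left]
    exact tsum_congr fun n => by rw [← mul_assoc, ← pow_succ']
  have h3 : (∑' n : ℕ, q ^ n * (s⁻¹) ^ n) =
      1 + ∑' n : ℕ, q ^ (n + 1) * (s⁻¹) ^ (n + 1) := by
    rw [Summable.tsum_eq_zero_add hg]
    simp only [pow_zero, one_mul]
  have hkey : T * s - q * T = 1 := by
    rw [h1, h2, h3, add_sub_cancel_right]
  have hqT : q * T = T * s - 1 := by
    have h4 := sub_eq_iff_eq_add.mp hkey
    rw [h4]; noncomm_ring
  -- characteristic polynomial of s
  have hstar' : star s = 2 * ((s.re : ℝ) : ℍ[ℝ]) - s := by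
    have h2c : ((2 : ℝ) : ℍ[ℝ]) = 2 := by
      rw [show (2:ℝ) = 1 + 1 by norm_num, Quaternion.coe_add, Quaternion.coe_one]; norm_num
    rw [Quaternion.star_eq_two_re_sub, Quaternion.coe_mul, h2c]
  have hchar : s ^ 2 - 2 * ((s.re : ℝ) : ℍ[ℝ]) * s + ((‖s‖ ^ 2 : ℝ) : ℍ[ℝ]) = 0 := by
    have h4 : (star s) * s = ((‖s‖ ^ 2 : ℝ) : ℍ[ℝ]) := by
      rw [star_mul_self, sq, normSq_eq_norm_mul_self]
    rw [← h4, hstar']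
    noncomm_ring
  set P := q ^ 2 - 2 * ((s.re : ℝ) : ℍ[ℝ]) * q + ((‖s‖ ^ 2 : ℝ) : ℍ[ℝ]) with hPdef
  have hcomm : ((s.re : ℝ) : ℍ[ℝ]) * T = T * ((s.re : ℝ) : ℍ[ℝ]) :=
    Quaternion.coe_commutes _ _
  have hcomm2 : ((‖s‖ ^ 2 : ℝ) : ℍ[ℝ]) * T = T * ((‖s‖ ^ 2 : ℝ) : ℍ[ℝ]) :=
    Quaternion.coe_commutes _ _
  have hPT : P * T = star s - q := by
    have e2 : q * (q * T) = T * s * s - s - q := by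
      rw [hqT, mul_sub, mul_one, ← mul_assoc, hqT]; noncomm_ring
    have e3 : P * T = q * (q * T) - 2 * ((s.re : ℝ) : ℍ[ℝ]) * (q * T)
        + ((‖s‖ ^ 2 : ℝ) : ℍ[ℝ]) * T := by
      rw [hPdef]; noncomm_ring
    have e4 : 2 * ((s.re : ℝ) : ℍ[ℝ]) * (T * s - 1)
        = T * (2 * ((s.re : ℝ) : ℍ[ℝ]) * s) - 2 * ((s.re : ℝ) : ℍ[ℝ]) := by
      calc 2 * ((s.re : ℝ) : ℍ[ℝ]) * (T * s - 1)
          = 2 * (((s.re : ℝ) : ℍ[ℝ]) * T) * s - 2 * ((s.re : ℝ) : ℍ[ℝ]) := by noncomm_ring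
        _ = 2 * (T * ((s.re : ℝ) : ℍ[ℝ])) * s - 2 * ((s.re : ℝ) : ℍ[ℝ]) := by rw [hcomm]
        _ = T * (2 * ((s.re : ℝ) : ℍ[ℝ]) * s) - 2 * ((s.re : ℝ) : ℍ[ℝ]) := by noncomm_ring
    rw [e3, e2, hqT, e4, hcomm2, hstar']
    have e6 : T * s * s - s - q - (T * (2 * ((s.re : ℝ) : ℍ[ℝ]) * s)
          - 2 * ((s.re : ℝ) : ℍ[ℝ])) + T * ((‖s‖ ^ 2 : ℝ) : ℍ[ℝ])
        = T * (s ^ 2 - 2 * ((s.re : ℝ) : ℍ[ℝ]) * s + ((‖s‖ ^ 2 : ℝ) : ℍ[ℝ]))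
          + (2 * ((s.re : ℝ) : ℍ[ℝ]) - s - q) := by noncomm_ring
    rw [e6, hchar, mul_zero, zero_add]
  have hfin : T = P⁻¹ * (P * T) := by rw [← mul_assoc, inv_mul_cancel₀ hP, one_mul]
  rw [hfin, hPT]
  noncomm_ring
end

section
/- Let q be a quaternion and s = u + v*I where u, v are real, v > 0, and I is a purely imaginary unit quaternion. If |q - u| < v, then the series ∑_{n≥0} (q - u)ⁿ * (v*I)^{-n-1} converges and its sum equals -(q² - 2*u*q + u² + v²)⁻¹ * (q - u + v*I). -/
open Quaternion

set_option maxHeartbeats 1000000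

theorem stmt_8 (q : ℍ[ℝ]) (u v : ℝ) (hv : 0 < v) (I : ℍ[ℝ]) (hI : I ^ 2 = -1)
    (h : ‖q - (u : ℍ[ℝ])‖ < v) :
    Summable (fun n : ℕ => (q - (u : ℍ[ℝ])) ^ n * (((v : ℍ[ℝ]) * I)⁻¹) ^ (n + 1)) ∧
    ∑' n : ℕ, (q - (u : ℍ[ℝ])) ^ n * (((v : ℍ[ℝ]) * I)⁻¹) ^ (n + 1) =
      -(q ^ 2 - 2 * (u : ℍ[ℝ]) * q + ((u ^ 2 + v ^ 2 : ℝ) : ℍ[ℝ]))⁻¹ *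
        (q - (u : ℍ[ℝ]) + (v : ℍ[ℝ]) * I) := by
  set a : ℍ[ℝ] := q - (u : ℍ[ℝ]) with ha
  set b : ℍ[ℝ] := (v : ℍ[ℝ]) * I with hb
  have hv0 : (v : ℝ) ≠ 0 := ne_of_gt hv
  have hv2 : (v ^ 2 : ℝ) ≠ 0 := pow_ne_zero _ hv0
  have hb2 : b ^ 2 = -((v ^ 2 : ℝ) : ℍ[ℝ]) := by
    rw [hb, (Quaternion.coe_commute v I).mul_pow, hI]
    push_cast
    rw [mul_neg_one]
  have hIone : ‖I‖ = 1 := by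
    have : ‖I‖ ^ 2 = 1 := by rw [← norm_pow, hI]; simp
    nlinarith [norm_nonneg I]
  have hbnorm : ‖b‖ = v := by
    rw [hb, norm_mul, hIone, mul_one, Quaternion.norm_coe, Real.norm_of_nonneg hv.le]
  have hbne : b ≠ 0 := by
    intro h0; rw [h0] at hbnorm; simp at hbnorm; exact hv0 hbnorm.symm
  -- inverse of b
  have hbinv : b⁻¹ = -(((v ^ 2)⁻¹ : ℝ) : ℍ[ℝ]) * b := by
    refine inv_eq_of_mul_eq_one_right ?_
    rw [neg_mul, mul_neg, Quaternion.coe_commutes, ← mul_assoc, ← pow_two, hb2]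
    rw [neg_mul, neg_neg, ← Quaternion.coe_mul]
    simp [hv2]
  -- norms of terms
  have key : ∀ n : ℕ, ‖a ^ n * (b⁻¹) ^ (n + 1)‖ = v⁻¹ * (‖a‖ * v⁻¹) ^ n := by
    intro n
    rw [norm_mul, norm_pow, norm_pow, norm_inv, hbnorm, mul_pow, pow_succ]
    ring
  have hr : ‖a‖ * v⁻¹ < 1 := by
    rw [← div_eq_mul_inv, div_lt_one hv]; exact h
  have hsummable : Summable (fun n : ℕ => a ^ n * (b⁻¹) ^ (n + 1)) := by
    apply Summable.of_norm
    simp only [key]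
    exact (summable_geometric_of_lt_one (by positivity) hr).mul_left _
  refine ⟨hsummable, ?_⟩
  -- the central scalar s and the ratio c
  set s : ℍ[ℝ] := (((v ^ 2)⁻¹ : ℝ) : ℍ[ℝ]) with hs
  have hbi2 : (b⁻¹) ^ 2 = -s := by
    rw [inv_pow, hb2, inv_neg, hs, Quaternion.coe_inv]
  set c : ℍ[ℝ] := a ^ 2 * -s with hc
  have hcomm : ∀ x : ℍ[ℝ], x * -s = -s * x := fun x => by
    rw [mul_neg, neg_mul, hs, Quaternion.coe_commutes]
  have hcnorm : ‖c‖ < 1 := by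
    rw [hc, norm_mul, norm_pow, norm_neg, hs, Quaternion.norm_coe]
    rw [norm_inv, Real.norm_of_nonneg (by positivity)]
    rw [← div_eq_mul_inv, div_lt_one (by positivity)]
    nlinarith [norm_nonneg a]
  have h1 : Commute a (-s) := hcomm a
  have h2 : Commute (a ^ 2) (-s) := hcomm (a ^ 2)
  have feven : ∀ k : ℕ, a ^ (2 * k) * (b⁻¹) ^ (2 * k + 1) = c ^ k * b⁻¹ := by
    intro k
    rw [pow_succ, pow_mul, pow_mul, hbi2, hc, h2.mul_pow, mul_assoc]
  have fodd : ∀ k : ℕ, a ^ (2 * k + 1) * (b⁻¹) ^ (2 * k + 1 + 1) = c ^ k * (a * -s) := by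
    intro k
    calc a ^ (2 * k + 1) * (b⁻¹) ^ (2 * k + 1 + 1)
        = (a ^ 2) ^ k * a * ((-s) ^ k * (-s)) := by
          rw [pow_succ a, pow_mul, show 2 * k + 1 + 1 = 2 * (k + 1) by ring, pow_mul,
            hbi2, pow_succ (-s) k]
      _ = ((a ^ 2) ^ k * (-s) ^ k) * (a * -s) := by
          rw [mul_assoc, ← mul_assoc a, (h1.pow_right k).eq, mul_assoc, ← mul_assoc]
      _ = c ^ k * (a * -s) := by rw [hc, h2.mul_pow]
  have hgeo : Summable (fun k : ℕ => c ^ k) := summable_geometric_of_norm_lt_one hcnorm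
  have he : Summable (fun k : ℕ => a ^ (2 * k) * (b⁻¹) ^ (2 * k + 1)) := by
    simp only [feven]; exact hgeo.mul_right _
  have ho : Summable (fun k : ℕ => a ^ (2 * k + 1) * (b⁻¹) ^ (2 * k + 1 + 1)) := by
    simp only [fodd]; exact hgeo.mul_right _
  rw [← tsum_even_add_odd (f := fun n : ℕ => a ^ n * (b⁻¹) ^ (n + 1)) he ho]
  simp only [feven, fodd, tsum_mul_right, tsum_geometric_of_norm_lt_one hcnorm]
  -- final algebra
  have hcu : (u : ℍ[ℝ]) * q = q * (u : ℍ[ℝ]) := Quaternion.coe_commutes u q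
  have hD : q ^ 2 - 2 * (u : ℍ[ℝ]) * q + ((u ^ 2 + v ^ 2 : ℝ) : ℍ[ℝ])
      = a ^ 2 + ((v ^ 2 : ℝ) : ℍ[ℝ]) := by
    have hsq : (q - (u : ℍ[ℝ])) ^ 2 = q ^ 2 - 2 * (u : ℍ[ℝ]) * q + ((u : ℍ[ℝ])) ^ 2 := by
      rw [pow_two, sub_mul, mul_sub, mul_sub, ← hcu]
      noncomm_ring
    rw [ha]
    push_cast
    rw [hsq]
    noncomm_ring
  have h1c : 1 - c = s * (a ^ 2 + ((v ^ 2 : ℝ) : ℍ[ℝ])) := by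
    rw [hc, hs, mul_add, ← Quaternion.coe_mul, inv_mul_cancel₀ hv2, Quaternion.coe_one,
      Quaternion.coe_commutes]
    noncomm_ring
  have hinv : (1 - c)⁻¹ = (a ^ 2 + ((v ^ 2 : ℝ) : ℍ[ℝ]))⁻¹ * ((v ^ 2 : ℝ) : ℍ[ℝ]) := by
    rw [h1c, mul_inv_rev, hs, ← Quaternion.coe_inv, inv_inv]
  have hfac : b⁻¹ + a * -s = -s * (a + b) := by
    rw [hbinv, (h1).eq]
    noncomm_ring
  have hkey : (1 - c)⁻¹ * -s = -(a ^ 2 + ((v ^ 2 : ℝ) : ℍ[ℝ]))⁻¹ := by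
    rw [hinv, hs, mul_neg, mul_assoc, ← Quaternion.coe_mul, mul_inv_cancel₀ hv2,
      Quaternion.coe_one, mul_one]
  rw [← mul_add, hfac, ← mul_assoc, hkey, hD]
end

section
/- For real numbers u, v with v > 0 and a purely imaginary unit quaternion I, and any quaternion q with |q - u| ≠ v or Re(q) ≠ u, the quaternion q² - 2*u*q + u² + v² is nonzero; hence the Cauchy kernel S⁻¹(u+vI, q) = -(q² - 2uq + u² + v²)⁻¹(q - u + vI) is well-defined exactly when q does not lie on the 2-sphere {u + v*J : J purely imaginary unit}. -/
set_option maxHeartbeats 1000000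


open Quaternion

theorem stmt_9 (u v : ℝ) (hv : 0 < v) (I : ℍ[ℝ]) (hI : I ^ 2 = -1) (q : ℍ[ℝ]) :
    ((‖q - (u : ℍ[ℝ])‖ ≠ v ∨ q.re ≠ u) →
      q ^ 2 - 2 * (u : ℍ[ℝ]) * q + ((u ^ 2 + v ^ 2 : ℝ) : ℍ[ℝ]) ≠ 0) ∧
    (q ^ 2 - 2 * (u : ℍ[ℝ]) * q + ((u ^ 2 + v ^ 2 : ℝ) : ℍ[ℝ]) = 0 ↔
      q.re = u ∧ ‖q.im‖ = v) := by
  have hnorm : ‖q.im‖ ^ 2 = q.imI ^ 2 + q.imJ ^ 2 + q.imK ^ 2 := by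
    rw [sq, ← Quaternion.normSq_eq_norm_mul_self, Quaternion.normSq_def']
    simp [sq]
  have norm_eq_of_sq : ∀ x : ℍ[ℝ], ‖x‖ ^ 2 = v ^ 2 → ‖x‖ = v := by
    intro x hx
    have h0 : (‖x‖ - v) * (‖x‖ + v) = 0 := by nlinarith
    rcases mul_eq_zero.1 h0 with h' | h'
    · linarith
    · nlinarith [norm_nonneg x]
  have h2u : (2 : ℍ[ℝ]) * (u : ℍ[ℝ]) * q = ((2 * u : ℝ) : ℍ[ℝ]) * q := by
    rw [show ((2:ℍ[ℝ])) = ((2:ℝ):ℍ[ℝ]) by norm_cast, ← Quaternion.coe_mul]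
  have key : q ^ 2 - 2 * (u : ℍ[ℝ]) * q + ((u ^ 2 + v ^ 2 : ℝ) : ℍ[ℝ]) = 0 ↔
      q.re = u ∧ ‖q.im‖ = v := by
    rw [h2u, Quaternion.ext_iff]
    simp only [sq, Quaternion.re_sub, Quaternion.re_add, Quaternion.re_mul,
      Quaternion.imI_sub, Quaternion.imI_add, Quaternion.imI_mul,
      Quaternion.imJ_sub, Quaternion.imJ_add, Quaternion.imJ_mul,
      Quaternion.imK_sub, Quaternion.imK_add, Quaternion.imK_mul,
      Quaternion.re_coe, Quaternion.imI_coe, Quaternion.imJ_coe, Quaternion.imK_coe,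
      Quaternion.re_zero, Quaternion.imI_zero, Quaternion.imJ_zero, Quaternion.imK_zero,
      mul_zero, zero_mul, sub_zero, add_zero, zero_add]
    constructor
    · rintro ⟨h1, h2, h3, h4⟩
      have hre : q.re = u := by
        by_contra h
        have hi : q.imI = 0 := by
          rcases mul_eq_zero.1 (by nlinarith [h2] : (2 * q.re - 2 * u) * q.imI = 0) with h' | h'
          · exact absurd (by linarith) h
          · exact h'
        have hj : q.imJ = 0 := by
          rcases mul_eq_zero.1 (by nlinarith [h3] : (2 * q.re - 2 * u) * q.imJ = 0) with h' | h'
          · exact absurd (by linarith) h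
          · exact h'
        have hk : q.imK = 0 := by
          rcases mul_eq_zero.1 (by nlinarith [h4] : (2 * q.re - 2 * u) * q.imK = 0) with h' | h'
          · exact absurd (by linarith) h
          · exact h'
        nlinarith [sq_nonneg (q.re - u)]
      refine ⟨hre, norm_eq_of_sq _ ?_⟩
      rw [hnorm]; nlinarith
    · rintro ⟨hre, him⟩
      have hs : q.imI ^ 2 + q.imJ ^ 2 + q.imK ^ 2 = v ^ 2 := by rw [← hnorm, him]
      subst hre
      exact ⟨by linear_combination -hs, by ring, by ring, by ring⟩
  refine ⟨?_, key⟩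
  intro h hz
  obtain ⟨hre, him⟩ := key.1 hz
  rcases h with h | h
  · apply h
    apply norm_eq_of_sq
    rw [sq, ← Quaternion.normSq_eq_norm_mul_self, Quaternion.normSq_def']
    simp only [Quaternion.re_sub, Quaternion.imI_sub, Quaternion.imJ_sub, Quaternion.imK_sub,
      Quaternion.re_coe, Quaternion.imI_coe, Quaternion.imJ_coe, Quaternion.imK_coe]
    have hh := hnorm
    rw [him] at hh
    nlinarith [hh]
  · exact h hre
end

section
/- Let q and s be quaternions with qs ≠ sq, and set W := (q - conj(s))⁻¹ * s * (q - conj(s)). Then W² - (s + q)*W + s*q = 0. -/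
open Quaternion

theorem stmt_12 (q s : ℍ[ℝ]) (h : q * s ≠ s * q) :
    ((q - star s)⁻¹ * s * (q - star s)) ^ 2 -
      (s + q) * ((q - star s)⁻¹ * s * (q - star s)) + s * q = 0 := by
  set d : ℍ[ℝ] := q - star s with hd_def
  have hd : d ≠ 0 := by
    intro h0
    apply h
    have hq : q = star s := sub_eq_zero.mp h0
    rw [hq, star_comm_self']
  set W : ℍ[ℝ] := d⁻¹ * s * d with hW_def
  have key : d * W = s * d := by
    rw [hW_def, ← mul_assoc, ← mul_assoc, mul_inv_cancel₀ hd, one_mul]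
  have hc1 : ∀ x : ℍ[ℝ], (s + star s) * x = x * (s + star s) := by
    intro x
    rw [self_add_star', coe_commutes]
  have hc2 : ∀ x : ℍ[ℝ], (s * star s) * x = x * (s * star s) := by
    intro x
    rw [self_mul_star, coe_commutes]
  -- rewrite the expression using key: (s+q) W = (s + star s) W + s*d
  have hsq : (s + q) * W = (s + star s) * W + s * d := by
    rw [← key]; simp only [hd_def]; noncomm_ring
  have hE : W ^ 2 - (s + q) * W + s * q =
      W ^ 2 - (s + star s) * W + s * star s := by
    rw [hsq, hd_def]; noncomm_ring
  rw [hE]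
  have hdE : d * (W ^ 2 - (s + star s) * W + s * star s) = 0 := by
    have h1 : d * W ^ 2 = s * s * d := by
      rw [sq, ← mul_assoc, key, mul_assoc, key, ← mul_assoc]
    have h2 : d * ((s + star s) * W) = (s + star s) * s * d := by
      rw [← mul_assoc, ← hc1 d, mul_assoc, key, ← mul_assoc]
    calc d * (W ^ 2 - (s + star s) * W + s * star s)
        = d * W ^ 2 - d * ((s + star s) * W) + d * (s * star s) := by noncomm_ring
      _ = s * s * d - (s + star s) * s * d + (s * star s) * d := by
          rw [h1, h2, ← hc2 d]
      _ = (s * s - (s + star s) * s + s * star s) * d := by noncomm_ring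
      _ = (s * star s - star s * s) * d := by noncomm_ring
      _ = 0 := by rw [star_comm_self', sub_self, zero_mul]
  rcases mul_eq_zero.mp hdE with h0 | h0
  · exact absurd h0 hd
  · exact h0
end

section
/- Let s = u + v*I with u, v real and I a purely imaginary unit quaternion, and let q be a quaternion with q² - 2*u*q + u² + v² ≠ 0. Then the derivative in the real direction of the map x ↦ S⁻¹(s, q + x) at x = 0, where S⁻¹(s,q) = -(q² - 2*Re(s)*q + |s|²)⁻¹(q - conj(s)), equals (q² - 2*Re(s)*q + |s|²)⁻² * (q² - 2*q*conj(s) + conj(s)²). -/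
open Quaternion

theorem stmt_15 (u v : ℝ) (I : ℍ[ℝ]) (hI : I ^ 2 = -1) (s q : ℍ[ℝ])
    (hs : s = (u : ℍ[ℝ]) + (v : ℍ[ℝ]) * I)
    (h0 : q ^ 2 - 2 * ((u : ℝ) : ℍ[ℝ]) * q + ((u ^ 2 + v ^ 2 : ℝ) : ℍ[ℝ]) ≠ 0) :
    HasDerivAt
      (fun x : ℝ =>
        -((q + (x : ℍ[ℝ])) ^ 2 - 2 * ((s.re : ℝ) : ℍ[ℝ]) * (q + (x : ℍ[ℝ])) +
            ((‖s‖ ^ 2 : ℝ) : ℍ[ℝ]))⁻¹ * ((q + (x : ℍ[ℝ])) - star s))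
      (((q ^ 2 - 2 * ((s.re : ℝ) : ℍ[ℝ]) * q + ((‖s‖ ^ 2 : ℝ) : ℍ[ℝ]))⁻¹) ^ 2 *
        (q ^ 2 - 2 * q * star s + (star s) ^ 2))
      0 := by
  -- basic facts about I
  have h1 : (I^2).re = -1 := by rw [hI]; simp
  have h2 : (I^2).imI = 0 := by rw [hI]; simp
  have h3 : (I^2).imJ = 0 := by rw [hI]; simp
  have h4 : (I^2).imK = 0 := by rw [hI]; simp
  simp only [pow_two, Quaternion.re_mul, Quaternion.imI_mul, Quaternion.imJ_mul,
    Quaternion.imK_mul] at h1 h2 h3 h4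
  have hre : I.re = 0 := by
    nlinarith [sq_nonneg I.re, sq_nonneg I.imI, sq_nonneg I.imJ, sq_nonneg I.imK]
  rw [hre] at h1
  -- facts about s
  have hsI : star I = -I := Quaternion.star_eq_neg.mpr hre
  have hsre : s.re = u := by simp [hs, hre]
  have hstar : star s = (u : ℍ[ℝ]) - (v : ℍ[ℝ]) * I := by
    simp [hs, star_mul, hsI, sub_eq_add_neg, Quaternion.coe_mul_eq_smul,
      Quaternion.mul_coe_eq_smul]
  have hnorm : ‖s‖^2 = u^2 + v^2 := by
    have h5 : ‖s‖^2 = normSq s := by rw [Quaternion.normSq_eq_norm_mul_self, sq]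
    rw [h5, hs, Quaternion.normSq_def']
    simp only [Quaternion.re_add, Quaternion.imI_add, Quaternion.imJ_add, Quaternion.imK_add,
      Quaternion.re_coe, Quaternion.imI_coe, Quaternion.imJ_coe, Quaternion.imK_coe,
      Quaternion.re_mul, Quaternion.imI_mul, Quaternion.imJ_mul, Quaternion.imK_mul, hre]
    nlinarith
  rw [hsre, hnorm]
  set t := star s with hts
  -- ht : key identity for t := star s
  have hvI : ((v:ℍ[ℝ]) * I)^2 = -(((v^2 : ℝ)):ℍ[ℝ]) := by
    have : ((v:ℍ[ℝ]) * I)^2 = (v:ℍ[ℝ]) * (v:ℍ[ℝ]) * (I * I) := by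
      rw [sq, mul_assoc, ← mul_assoc I, ← Quaternion.coe_commutes, mul_assoc, ← mul_assoc]
    rw [this, ← sq, ← sq, hI]
    push_cast
    noncomm_ring
  have ht : t ^ 2 = 2 * ((u : ℝ) : ℍ[ℝ]) * t - ((u^2 + v^2 : ℝ) : ℍ[ℝ]) := by
    have hc : ((v:ℍ[ℝ])*I) * ((u:ℝ):ℍ[ℝ]) = ((u:ℝ):ℍ[ℝ]) * ((v:ℍ[ℝ])*I) :=
      (Quaternion.coe_commutes u _).symm
    have hexp : ((u:ℍ[ℝ]) - (v:ℍ[ℝ])*I)^2 =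
        (u:ℍ[ℝ])*(u:ℍ[ℝ]) - (u:ℍ[ℝ])*((v:ℍ[ℝ])*I) - ((v:ℍ[ℝ])*I)*(u:ℍ[ℝ]) +
          ((v:ℍ[ℝ])*I)^2 := by noncomm_ring
    rw [hstar, hexp, hc, hvI]
    push_cast
    noncomm_ring
  -- derivative of the inverse part
  set P := q ^ 2 - 2 * (u:ℍ[ℝ]) * q + ((u^2+v^2:ℝ):ℍ[ℝ]) with hP
  have hcoe : HasDerivAt (fun x : ℝ => (x : ℍ[ℝ])) 1 0 := by
    have h := (hasDerivAt_id (0:ℝ)).smul_const (1:ℍ[ℝ])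
    have he : (fun y : ℝ => y • (1:ℍ[ℝ])) = (fun y : ℝ => (y : ℍ[ℝ])) := by
      funext y
      rw [← Quaternion.coe_one, Quaternion.smul_coe, mul_one]
    simpa [he] using h
  have hq : HasDerivAt (fun x : ℝ => q + (x : ℍ[ℝ])) 1 0 := hcoe.const_add q
  have hg : HasDerivAt (fun x : ℝ =>
      ((q + (x : ℍ[ℝ])) ^ 2 - 2 * ((u : ℝ) : ℍ[ℝ]) * (q + (x : ℍ[ℝ])) +
        ((u ^ 2 + v ^ 2 : ℝ) : ℍ[ℝ]))) (2*q - 2*(u:ℍ[ℝ])) 0 := by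
    have h2' : HasDerivAt (fun x : ℝ => (q + (x : ℍ[ℝ]))^2) (2*q) 0 := by
      have := hq.mul hq
      simp only [pow_two]
      exact this.congr_deriv (by simp [two_mul])
    have h3' := (h2'.sub ((hq.const_mul (2 * (u:ℍ[ℝ]))))).add_const ((u^2+v^2:ℝ):ℍ[ℝ])
    exact h3'.congr_deriv (by rw [mul_one])
  have hU : IsUnit P := isUnit_iff_ne_zero.mpr h0
  obtain ⟨x, hx⟩ := hU
  have hfd := hasFDerivAt_ringInverse (𝕜 := ℝ) (R := ℍ[ℝ]) x
  rw [hx] at hfd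
  have hg0 : (fun x : ℝ =>
      ((q + (x : ℍ[ℝ])) ^ 2 - 2 * ((u : ℝ) : ℍ[ℝ]) * (q + (x : ℍ[ℝ])) +
        ((u ^ 2 + v ^ 2 : ℝ) : ℍ[ℝ]))) 0 = P := by simp [hP]
  have hcomp := HasFDerivAt.comp_hasDerivAt_of_eq (x := (0:ℝ)) hfd hg hg0.symm
  have hxiv : ((x⁻¹ : ℍ[ℝ]ˣ) : ℍ[ℝ]) = P⁻¹ := by
    rw [← hx]; exact (Units.val_inv_eq_inv_val x)
  simp only [ContinuousLinearMap.neg_apply, ContinuousLinearMap.mulLeftRight_apply,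
    hxiv] at hcomp
  rw [Ring.inverse_eq_inv'] at hcomp
  have hinv : HasDerivAt (fun x : ℝ =>
      ((q + (x : ℍ[ℝ])) ^ 2 - 2 * ((u : ℝ) : ℍ[ℝ]) * (q + (x : ℍ[ℝ])) +
        ((u ^ 2 + v ^ 2 : ℝ) : ℍ[ℝ]))⁻¹)
      (-(P⁻¹ * (2*q - 2*(u:ℍ[ℝ])) * P⁻¹)) 0 := by
    simpa [Function.comp_def] using hcomp
  -- the linear factor
  have hsub : HasDerivAt (fun x : ℝ => (q + (x : ℍ[ℝ])) - t) 1 0 := hq.sub_const t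
  -- product rule
  have hF := (hinv.neg.mul hsub)
  have hF0 : (fun x : ℝ =>
      ((q + (x : ℍ[ℝ])) ^ 2 - 2 * ((u : ℝ) : ℍ[ℝ]) * (q + (x : ℍ[ℝ])) +
        ((u ^ 2 + v ^ 2 : ℝ) : ℍ[ℝ]))⁻¹) 0 = P⁻¹ := by simp [hP]
  refine hF.congr_deriv (Eq.symm ?_)
  simp only [Pi.neg_apply, neg_neg, Quaternion.coe_zero, add_zero, mul_one]
  -- now the algebraic identity
  rw [← hP]
  set A := 2*q - 2*(u:ℍ[ℝ]) with hA
  have hcq : Commute q P := by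
    exact (((Commute.refl q).pow_right 2).sub_right
      (((Commute.ofNat_right q 2).mul_right (Quaternion.coe_commute u q).symm).mul_right
        (Commute.refl q))).add_right (Quaternion.coe_commute (u^2+v^2) q).symm
  have hPA : Commute P A := by
    exact ((Commute.ofNat_right P 2).mul_right hcq.symm).sub_right
      ((Commute.ofNat_right P 2).mul_right (Quaternion.coe_commute u P).symm)
  have e1 : Commute P⁻¹ A := hPA.inv_left₀
  have hbr : A*(q-t) - P = q^2 - 2*q*t + t^2 := by rw [ht, hP, hA]; noncomm_ring
  have hPP : P⁻¹*P⁻¹*P = P⁻¹ := by rw [mul_assoc, inv_mul_cancel₀ h0, mul_one]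
  have e2 : P⁻¹*P⁻¹*A = P⁻¹*A*P⁻¹ := by simp only [mul_assoc]; rw [e1.eq]
  rw [sq, ← hbr, mul_sub (P⁻¹*P⁻¹), ← mul_assoc (P⁻¹*P⁻¹), e2, hPP]
  noncomm_ring
end

section
/- Let I be a purely imaginary unit quaternion, q = x + y*I with x, y real, y > 0, and let s₁ = x + y*I. Parametrize a small circle around s₁ in the plane L_I by s(θ) = s₁ + ε e^{Iθ}. Then the limit as ε → 0⁺ of (1/2π)∫₀^{2π} -(q² - 2Re(s(θ))q + |s(θ)|²)⁻¹ (q - conj(s(θ))) ε e^{Iθ} dθ · 1 equals ½(1 - I·I) = 1 when the kernel variable unit coincides with I; more generally, for q = x + y*I_q with I_q a purely imaginary unit, the residue at s₁ = x + yI equals ½(1 - I_q·I). -/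
open Quaternion Real

set_option maxHeartbeats 1000000

lemma res_pure (u : ℍ[ℝ]) (hu : u ^ 2 = -1) :
    u.re = 0 ∧ u.imI ^ 2 + u.imJ ^ 2 + u.imK ^ 2 = 1 := by
  rw [sq, Quaternion.ext_iff] at hu
  simp at hu
  obtain ⟨h1, h2, h3, h4⟩ := hu
  constructor <;>
    nlinarith [sq_nonneg u.re, sq_nonneg u.imI, sq_nonneg u.imJ, sq_nonneg u.imK]

noncomputable def resD (y ε θ : ℝ) (Iq : ℍ[ℝ]) : ℍ[ℝ] :=
  ((ε + 2 * y * Real.sin θ : ℝ) : ℍ[ℝ]) - ((2 * y * Real.cos θ : ℝ) : ℍ[ℝ]) * Iq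

noncomputable def resH (x y : ℝ) (I Iq : ℍ[ℝ]) (ε θ : ℝ) : ℍ[ℝ] :=
  -(resD y ε θ Iq)⁻¹ *
    (((x : ℍ[ℝ]) + (y : ℍ[ℝ]) * Iq) -
      star ((x : ℍ[ℝ]) + (y : ℍ[ℝ]) * I +
        (ε : ℍ[ℝ]) * ((Real.cos θ : ℍ[ℝ]) + (Real.sin θ : ℍ[ℝ]) * I))) *
    ((Real.cos θ : ℍ[ℝ]) + (Real.sin θ : ℍ[ℝ]) * I)

lemma resD_ne_zero (y ε θ : ℝ) (Iq : ℍ[ℝ]) (hy : 0 < y)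
    (h3 : Iq.re = 0) (h4 : Iq.imI ^ 2 + Iq.imJ ^ 2 + Iq.imK ^ 2 = 1)
    (hε1 : -y ≤ ε) (hε2 : ε ≤ y) : resD y ε θ Iq ≠ 0 := by
  intro h
  have hns : normSq (resD y ε θ Iq) = 0 := by rw [h]; simp
  rw [Quaternion.normSq_def'] at hns
  simp only [resD] at hns
  simp [h3] at hns
  nlinarith [Real.neg_one_le_sin θ, Real.sin_le_one θ, Real.sin_sq_add_cos_sq θ,
    sq_nonneg (ε + 2 * y * Real.sin θ), sq_nonneg (2 * y * Real.cos θ), h4, hy,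
    sq_nonneg (y - ε), sq_nonneg (y + ε), mul_pos hy hy]

lemma res_denom (x y ε θ : ℝ) (I Iq : ℍ[ℝ])
    (h1 : I.re = 0) (h2 : I.imI ^ 2 + I.imJ ^ 2 + I.imK ^ 2 = 1)
    (h3 : Iq.re = 0) (h4 : Iq.imI ^ 2 + Iq.imJ ^ 2 + Iq.imK ^ 2 = 1) :
    ((x : ℍ[ℝ]) + y * Iq) ^ 2
      - 2 * (((((x : ℍ[ℝ]) + y * I + ε * ((cos θ : ℍ[ℝ]) + (sin θ : ℍ[ℝ]) * I)).re : ℝ)) : ℍ[ℝ]) *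
          ((x : ℍ[ℝ]) + y * Iq)
      + ((‖(x : ℍ[ℝ]) + y * I + ε * ((cos θ : ℍ[ℝ]) + (sin θ : ℍ[ℝ]) * I)‖ ^ 2 : ℝ) : ℍ[ℝ])
    = (ε : ℍ[ℝ]) * resD y ε θ Iq := by
  have hn : ∀ a : ℍ[ℝ], ‖a‖ ^ 2 = normSq a := by
    intro a; rw [sq, ← Quaternion.normSq_eq_norm_mul_self]
  rw [hn]
  unfold resD
  ext <;> simp [pow_two, two_mul, Quaternion.normSq_def', h1, h3]
  · linear_combination ((y + ε * Real.sin θ) ^ 2) * h2 - y ^ 2 * h4 +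
      ε ^ 2 * (Real.sin_sq_add_cos_sq θ)
  · ring
  · ring
  · ring

lemma resH_zero (x y θ : ℝ) (I Iq : ℍ[ℝ]) (hy : 0 < y)
    (h1 : I.re = 0) (h2 : I.imI ^ 2 + I.imJ ^ 2 + I.imK ^ 2 = 1)
    (h3 : Iq.re = 0) (h4 : Iq.imI ^ 2 + Iq.imJ ^ 2 + Iq.imK ^ 2 = 1) :
    resH x y I Iq 0 θ = (1 / 2 : ℝ) • (1 - Iq * I) := by
  have hd : resD y 0 θ Iq ≠ 0 :=
    resD_ne_zero y 0 θ Iq hy h3 h4 (by linarith) (by linarith)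
  have key : resD y 0 θ Iq * ((1 / 2 : ℝ) • (1 - Iq * I)) =
      -((((x : ℍ[ℝ]) + (y : ℍ[ℝ]) * Iq) -
        star ((x : ℍ[ℝ]) + (y : ℍ[ℝ]) * I +
          ((0:ℝ) : ℍ[ℝ]) * ((Real.cos θ : ℍ[ℝ]) + (Real.sin θ : ℍ[ℝ]) * I))) *
        ((Real.cos θ : ℍ[ℝ]) + (Real.sin θ : ℍ[ℝ]) * I)) := by
    unfold resD
    ext <;> simp [pow_two, two_mul, h1, h3]
    · linear_combination (-(y * Real.sin θ)) * h2
    · linear_combination (-(y * Real.cos θ * I.imI)) * h4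
    · linear_combination (-(y * Real.cos θ * I.imJ)) * h4
    · linear_combination (-(y * Real.cos θ * I.imK)) * h4
  unfold resH
  rw [neg_mul, neg_mul, mul_assoc, ← mul_neg, ← key, inv_mul_cancel_left₀ hd]

lemma res_integrand_eq (x y ε θ : ℝ) (I Iq : ℍ[ℝ]) (hy : 0 < y)
    (h1 : I.re = 0) (h2 : I.imI ^ 2 + I.imJ ^ 2 + I.imK ^ 2 = 1)
    (h3 : Iq.re = 0) (h4 : Iq.imI ^ 2 + Iq.imJ ^ 2 + Iq.imK ^ 2 = 1)
    (hε0 : 0 < ε) (hεy : ε ≤ y) :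
    -((((x : ℍ[ℝ]) + y * Iq) ^ 2
        - 2 * (((((x : ℍ[ℝ]) + y * I + ε * ((cos θ : ℍ[ℝ]) + (sin θ : ℍ[ℝ]) * I)).re : ℝ)) : ℍ[ℝ]) *
            ((x : ℍ[ℝ]) + y * Iq)
        + ((‖(x : ℍ[ℝ]) + y * I + ε * ((cos θ : ℍ[ℝ]) + (sin θ : ℍ[ℝ]) * I)‖ ^ 2 : ℝ) : ℍ[ℝ]))⁻¹ *
      (((x : ℍ[ℝ]) + y * Iq) -
        star ((x : ℍ[ℝ]) + y * I + ε * ((cos θ : ℍ[ℝ]) + (sin θ : ℍ[ℝ]) * I))) *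
      ((ε : ℍ[ℝ]) * ((cos θ : ℍ[ℝ]) + (sin θ : ℍ[ℝ]) * I)))
    = resH x y I Iq ε θ := by
  have hd : resD y ε θ Iq ≠ 0 :=
    resD_ne_zero y ε θ Iq hy h3 h4 (by linarith) hεy
  have hεq : (ε : ℍ[ℝ]) ≠ 0 := by
    rw [← Quaternion.coe_zero]
    exact fun h => hε0.ne' (Quaternion.coe_injective h)
  rw [res_denom x y ε θ I Iq h1 h2 h3 h4]
  unfold resH
  set n := (((x : ℍ[ℝ]) + y * Iq) -
    star ((x : ℍ[ℝ]) + y * I + ε * ((cos θ : ℍ[ℝ]) + (sin θ : ℍ[ℝ]) * I))) with hn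
  set e := ((cos θ : ℍ[ℝ]) + (sin θ : ℍ[ℝ]) * I) with he
  rw [mul_inv_rev, ← Quaternion.coe_inv]
  have hcen : ∀ (r : ℝ) (a : ℍ[ℝ]), (r : ℍ[ℝ]) * a = a * r := Quaternion.coe_commutes
  calc -( (resD y ε θ Iq)⁻¹ * ((ε⁻¹:ℝ):ℍ[ℝ]) * n * ((ε:ℍ[ℝ]) * e))
      = -(resD y ε θ Iq)⁻¹ * (((ε⁻¹:ℝ):ℍ[ℝ]) * n * ((ε:ℍ[ℝ]) * e)) := by
        noncomm_ring
    _ = -(resD y ε θ Iq)⁻¹ * (n * e) := by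
        rw [hcen ε⁻¹ n, mul_assoc, ← mul_assoc (((ε⁻¹:ℝ)):ℍ[ℝ]), ← Quaternion.coe_mul,
          inv_mul_cancel₀ hε0.ne']
        simp
    _ = -(resD y ε θ Iq)⁻¹ * n * e := by rw [mul_assoc]

theorem stmt_18 (x y : ℝ) (hy : 0 < y) (I Iq : ℍ[ℝ])
    (hI : I ^ 2 = -1) (hIq : Iq ^ 2 = -1) (q : ℍ[ℝ])
    (hq : q = (x : ℍ[ℝ]) + (y : ℍ[ℝ]) * Iq) :
    Filter.Tendsto
      (fun ε : ℝ =>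
        (1 / (2 * π) : ℝ) •
          ∫ θ in (0 : ℝ)..(2 * π),
            (fun s : ℍ[ℝ] =>
                -(q ^ 2 - 2 * ((s.re : ℝ) : ℍ[ℝ]) * q + ((‖s‖ ^ 2 : ℝ) : ℍ[ℝ]))⁻¹ *
                  (q - star s))
              ((x : ℍ[ℝ]) + (y : ℍ[ℝ]) * I +
                (ε : ℍ[ℝ]) * ((Real.cos θ : ℍ[ℝ]) + (Real.sin θ : ℍ[ℝ]) * I)) *
            ((ε : ℍ[ℝ]) * ((Real.cos θ : ℍ[ℝ]) + (Real.sin θ : ℍ[ℝ]) * I)))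
      (nhdsWithin 0 (Set.Ioi 0))
      (nhds ((1 / 2 : ℝ) • (1 - Iq * I))) := by
  obtain ⟨h1, h2⟩ := res_pure I hI
  obtain ⟨h3, h4⟩ := res_pure Iq hIq
  subst hq
  set c : ℝ → ℝ := fun ε => max (min ε y) (-y) with hc
  have hc1 : ∀ ε, -y ≤ c ε := fun ε => le_max_right _ _
  have hc2 : ∀ ε, c ε ≤ y := fun ε =>
    max_le (min_le_right _ _) (by linarith)
  have ccoe : Continuous (fun r : ℝ => (r : ℍ[ℝ])) := Quaternion.continuous_coe
  have cc : Continuous c := (continuous_id.min continuous_const).max continuous_const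
  have cd : Continuous fun p : ℝ × ℝ => resD y (c p.1) p.2 Iq := by
    unfold resD
    exact ((ccoe.comp ((cc.comp continuous_fst).add
        (continuous_const.mul (Real.continuous_sin.comp continuous_snd)))).sub
      ((ccoe.comp (continuous_const.mul (Real.continuous_cos.comp continuous_snd))).mul
        continuous_const))
  have hdne : ∀ p : ℝ × ℝ, resD y (c p.1) p.2 Iq ≠ 0 := fun p =>
    resD_ne_zero y (c p.1) p.2 Iq hy h3 h4 (hc1 p.1) (hc2 p.1)
  have ce : Continuous fun p : ℝ × ℝ =>
      ((Real.cos p.2 : ℍ[ℝ]) + (Real.sin p.2 : ℍ[ℝ]) * I) :=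
    ((ccoe.comp (Real.continuous_cos.comp continuous_snd)).add
      ((ccoe.comp (Real.continuous_sin.comp continuous_snd)).mul continuous_const))
  have cn : Continuous fun p : ℝ × ℝ =>
      (((x : ℍ[ℝ]) + (y : ℍ[ℝ]) * Iq) -
        star ((x : ℍ[ℝ]) + (y : ℍ[ℝ]) * I +
          ((c p.1 : ℝ) : ℍ[ℝ]) * ((Real.cos p.2 : ℍ[ℝ]) + (Real.sin p.2 : ℍ[ℝ]) * I))) :=
    continuous_const.sub
      ((continuous_const.add ((ccoe.comp (cc.comp continuous_fst)).mul ce)).star)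
  have hk : Continuous (Function.uncurry fun ε θ => resH x y I Iq (c ε) θ) := by
    have : (Function.uncurry fun ε θ => resH x y I Iq (c ε) θ) =
        fun p : ℝ × ℝ => -((resD y (c p.1) p.2 Iq)⁻¹ *
          ((((x : ℍ[ℝ]) + (y : ℍ[ℝ]) * Iq) -
            star ((x : ℍ[ℝ]) + (y : ℍ[ℝ]) * I +
              ((c p.1 : ℝ) : ℍ[ℝ]) * ((Real.cos p.2 : ℍ[ℝ]) + (Real.sin p.2 : ℍ[ℝ]) * I))) *
          ((Real.cos p.2 : ℍ[ℝ]) + (Real.sin p.2 : ℍ[ℝ]) * I))) := by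
      funext p
      simp only [Function.uncurry, resH]
      noncomm_ring
    rw [this]
    exact (((cd.inv₀ hdne).mul (cn.mul ce)).neg)
  have hGc : Continuous fun ε : ℝ =>
      (1 / (2 * π) : ℝ) • ∫ θ in (0 : ℝ)..(2 * π), resH x y I Iq (c ε) θ :=
    by have := (intervalIntegral.continuous_parametric_intervalIntegral_of_continuous'
        (μ := MeasureTheory.volume) hk 0 (2 * π)).const_smul (1 / (2 * π) : ℝ); exact this
  have hc0 : c 0 = 0 := by
    simp only [hc]
    rw [min_eq_left hy.le, max_eq_left (by linarith)]
  have hG0 : (1 / (2 * π) : ℝ) • (∫ θ in (0 : ℝ)..(2 * π), resH x y I Iq (c 0) θ) =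
      (1 / 2 : ℝ) • (1 - Iq * I) := by
    rw [hc0]
    rw [intervalIntegral.integral_congr
      (g := fun _ => (1 / 2 : ℝ) • (1 - Iq * I))
      (fun θ _ => resH_zero x y θ I Iq hy h1 h2 h3 h4)]
    rw [intervalIntegral.integral_const, sub_zero, smul_smul, smul_smul]
    congr 1
    field_simp
  have tendstoG : Filter.Tendsto
      (fun ε : ℝ => (1 / (2 * π) : ℝ) • ∫ θ in (0 : ℝ)..(2 * π), resH x y I Iq (c ε) θ)
      (nhdsWithin 0 (Set.Ioi 0)) (nhds ((1 / 2 : ℝ) • (1 - Iq * I))) := by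
    rw [← hG0]
    exact (hGc.tendsto 0).mono_left nhdsWithin_le_nhds
  apply tendstoG.congr'
  filter_upwards [Ioo_mem_nhdsGT_of_mem (Set.mem_Ico.2 ⟨le_refl 0, hy⟩)] with ε hε
  obtain ⟨hε0, hεy⟩ := hε
  have hcε : c ε = ε := by
    simp only [hc]
    rw [min_eq_left hεy.le, max_eq_left (by linarith)]
  rw [hcε]
  congr 1
  apply intervalIntegral.integral_congr
  intro θ _
  beta_reduce
  rw [neg_mul, neg_mul]
  exact (res_integrand_eq x y ε θ I Iq hy h1 h2 h3 h4 hε0 hεy.le).symm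
end
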